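/- Dual representation of CVaR for finite probability spaces (Proposition 1, finite form): let Ω be a finite nonempty set, p a probability vector on Ω, Z : Ω → ℝ, and y ∈ (0,1]. Then sup_{ξ ∈ U(y,p)} Σ_ω ξ(ω)·p(ω)·Z(ω) = inf_{w ∈ ℝ} ( w + (1/y)·Σ_ω p(ω)·max(Z(ω) − w, 0) ), and both the supremum and the infimum are attained. -/

import Mathlib

noncomputable section

/-- The CVaR risk envelope `U(y, p)`. -/
def riskEnv {Ω : Type*} [Fintype Ω] (y : ℝ) (p : Ω → ℝ) : Set (Ω → ℝ) :=
  {ξ | (∀ ω, 0 ≤ ξ ω ∧ ξ ω ≤ 1 / y) ∧ ∑ ω, ξ ω * p ω = 1}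

theorem cvar_dual_rockafellar_uryasev {Ω : Type*} [Fintype Ω] [Nonempty Ω]
    (p : Ω → ℝ) (hp : (∀ ω, 0 ≤ p ω) ∧ ∑ ω, p ω = 1)
    (Z : Ω → ℝ) (y : ℝ) (hy : y ∈ Set.Ioc (0:ℝ) 1) :
    sSup ((fun ξ : Ω → ℝ => ∑ ω, ξ ω * p ω * Z ω) '' riskEnv y p)
        = sInf {r : ℝ | ∃ w : ℝ, r = w + (1 / y) * ∑ ω, p ω * max (Z ω - w) 0} ∧
    sSup ((fun ξ : Ω → ℝ => ∑ ω, ξ ω * p ω * Z ω) '' riskEnv y p)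
        ∈ ((fun ξ : Ω → ℝ => ∑ ω, ξ ω * p ω * Z ω) '' riskEnv y p) ∧
    sInf {r : ℝ | ∃ w : ℝ, r = w + (1 / y) * ∑ ω, p ω * max (Z ω - w) 0}
        ∈ {r : ℝ | ∃ w : ℝ, r = w + (1 / y) * ∑ ω, p ω * max (Z ω - w) 0} := by
  classical
  obtain ⟨hy0, hy1⟩ := hy
  obtain ⟨hp0, hp1⟩ := hp
  have hyne : y ≠ 0 := ne_of_gt hy0
  have hinvy : (0:ℝ) ≤ 1 / y := by positivity
  -- Weak duality
  have weak : ∀ ξ ∈ riskEnv y p, ∀ w : ℝ,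
      ∑ ω, ξ ω * p ω * Z ω ≤ w + (1 / y) * ∑ ω, p ω * max (Z ω - w) 0 := by
    intro ξ hξ w
    obtain ⟨hb, hs⟩ := hξ
    have h1 : ∑ ω, ξ ω * p ω * (Z ω - w) = ∑ ω, ξ ω * p ω * Z ω - w := by
      have : ∑ ω, ξ ω * p ω * (Z ω - w)
          = ∑ ω, (ξ ω * p ω * Z ω - w * (ξ ω * p ω)) := by
        apply Finset.sum_congr rfl; intro ω _; ring
      rw [this, Finset.sum_sub_distrib, ← Finset.mul_sum, hs, mul_one]
    have h2 : ∑ ω, ξ ω * p ω * (Z ω - w)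
        ≤ ∑ ω, (1 / y) * (p ω * max (Z ω - w) 0) := by
      apply Finset.sum_le_sum
      intro ω _
      have hξ0 := (hb ω).1
      have hξ1 := (hb ω).2
      have hpω := hp0 ω
      have hmax1 : Z ω - w ≤ max (Z ω - w) 0 := le_max_left _ _
      have hmax0 : (0:ℝ) ≤ max (Z ω - w) 0 := le_max_right _ _
      have step1 : ξ ω * p ω * (Z ω - w) ≤ ξ ω * p ω * max (Z ω - w) 0 :=
        mul_le_mul_of_nonneg_left hmax1 (by positivity)
      have step2 : ξ ω * p ω * max (Z ω - w) 0 ≤ (1 / y) * (p ω * max (Z ω - w) 0) := by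
        rw [mul_assoc]
        exact mul_le_mul_of_nonneg_right hξ1 (by positivity)
      linarith
    rw [← Finset.mul_sum] at h2
    linarith
  -- the tail probability function
  set tail : ℝ → ℝ := fun w => ∑ ω ∈ Finset.univ.filter (fun ω => w < Z ω), p ω with htail
  -- choose w*
  obtain ⟨ωmax, _, hωmax⟩ := Finset.exists_max_image Finset.univ Z Finset.univ_nonempty
  set R : Finset ℝ := Finset.image Z Finset.univ with hR
  set Tset : Finset ℝ := R.filter (fun v => tail v ≤ y) with hTset
  have hmaxmem : Z ωmax ∈ Tset := by
    rw [hTset, Finset.mem_filter]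
    constructor
    · exact Finset.mem_image_of_mem Z (Finset.mem_univ _)
    · have : Finset.univ.filter (fun ω => Z ωmax < Z ω) = ∅ := by
        apply Finset.filter_eq_empty_iff.mpr
        intro ω _
        exact not_lt.mpr (hωmax ω (Finset.mem_univ ω))
      simp only [htail, this, Finset.sum_empty]
      linarith
  have hTne : Tset.Nonempty := ⟨Z ωmax, hmaxmem⟩
  set w' : ℝ := Tset.min' hTne with hw'
  have hw'mem : w' ∈ Tset := Tset.min'_mem hTne
  have hw1 : tail w' ≤ y := (Finset.mem_filter.mp hw'mem).2
  -- y ≤ P(Z ≥ w')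
  have hw2 : y ≤ ∑ ω ∈ Finset.univ.filter (fun ω => w' ≤ Z ω), p ω := by
    by_cases hall : ∀ ω, w' ≤ Z ω
    · have : Finset.univ.filter (fun ω => w' ≤ Z ω) = Finset.univ := by
        apply Finset.filter_true_of_mem; intro ω _; exact hall ω
      rw [this, hp1]; exact hy1
    · push_neg at hall
      obtain ⟨ω1, hω1⟩ := hall
      set B : Finset ℝ := R.filter (fun v => v < w') with hB
      have hBne : B.Nonempty := by
        refine ⟨Z ω1, ?_⟩
        rw [hB, Finset.mem_filter]
        exact ⟨Finset.mem_image_of_mem Z (Finset.mem_univ _), hω1⟩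
      set v' : ℝ := B.max' hBne with hv'
      have hv'mem : v' ∈ B := B.max'_mem hBne
      have hv'lt : v' < w' := (Finset.mem_filter.mp hv'mem).2
      have hv'R : v' ∈ R := (Finset.mem_filter.mp hv'mem).1
      have hfeq : Finset.univ.filter (fun ω => w' ≤ Z ω)
          = Finset.univ.filter (fun ω => v' < Z ω) := by
        apply Finset.filter_congr
        intro ω _
        constructor
        · intro h; linarith
        · intro h
          by_contra hc
          push_neg at hc
          have hZB : Z ω ∈ B := by
            rw [hB, Finset.mem_filter]
            exact ⟨Finset.mem_image_of_mem Z (Finset.mem_univ _), hc⟩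
          have := B.le_max' _ hZB
          rw [← hv'] at this
          linarith
      rw [hfeq]
      have hv'not : v' ∉ Tset := by
        intro hc
        have := Tset.min'_le _ hc
        rw [← hw'] at this
        linarith
      have : ¬ tail v' ≤ y := by
        intro hc
        exact hv'not (Finset.mem_filter.mpr ⟨hv'R, hc⟩)
      push_neg at this
      exact le_of_lt this
  -- mass at w'
  set m : ℝ := ∑ ω ∈ Finset.univ.filter (fun ω => Z ω = w'), p ω with hm
  have hm0 : 0 ≤ m := Finset.sum_nonneg (fun ω _ => hp0 ω)
  have htail0 : 0 ≤ tail w' := Finset.sum_nonneg (fun ω _ => hp0 ω)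
  have hsplit : tail w' + m = ∑ ω ∈ Finset.univ.filter (fun ω => w' ≤ Z ω), p ω := by
    rw [htail, hm]
    rw [← Finset.sum_union]
    · congr 1
      ext ω
      simp only [Finset.mem_union, Finset.mem_filter, Finset.mem_univ, true_and]
      constructor
      · rintro (h | h)
        · exact le_of_lt h
        · exact le_of_eq h.symm
      · intro h
        rcases lt_or_eq_of_le h with h' | h'
        · exact Or.inl h'
        · exact Or.inr h'.symm
    · rw [Finset.disjoint_left]
      intro ω h1 h2
      simp only [Finset.mem_filter, Finset.mem_univ, true_and] at h1 h2
      linarith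
  have hyle : y ≤ tail w' + m := by rw [hsplit]; exact hw2
  -- optimal ξ
  set c : ℝ := if m = 0 then 0 else (y - tail w') / (y * m) with hc
  have hc0 : 0 ≤ c := by
    rw [hc]
    split_ifs with h
    · exact le_refl 0
    · have hmpos : 0 < m := lt_of_le_of_ne hm0 (Ne.symm h)
      apply div_nonneg (by linarith) (by positivity)
  have hcley : c ≤ 1 / y := by
    rw [hc]
    split_ifs with h
    · exact hinvy
    · have hmpos : 0 < m := lt_of_le_of_ne hm0 (Ne.symm h)
      rw [div_le_div_iff₀ (by positivity) hy0]
      nlinarith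
  set ξs : Ω → ℝ := fun ω => if w' < Z ω then 1 / y else if Z ω = w' then c else 0
    with hξs
  have hξmem : ξs ∈ riskEnv y p := by
    constructor
    · intro ω
      rw [hξs]
      dsimp only
      split_ifs with h1 h2
      · exact ⟨hinvy, le_refl _⟩
      · exact ⟨hc0, hcley⟩
      · exact ⟨le_refl _, hinvy⟩
    · have hterm : ∀ ω, ξs ω * p ω
          = (if w' < Z ω then (1 / y) * p ω else 0)
            + (if Z ω = w' then c * p ω else 0) := by
        intro ω
        rw [hξs]
        dsimp only
        by_cases h1 : w' < Z ω
        · have h2 : ¬ Z ω = w' := by intro hc'; rw [hc'] at h1; exact lt_irrefl _ h1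
          simp [h1, h2]
        · by_cases h2 : Z ω = w' <;> simp [h1, h2]
      rw [Finset.sum_congr rfl (fun ω _ => hterm ω), Finset.sum_add_distrib,
        ← Finset.sum_filter, ← Finset.sum_filter, ← Finset.mul_sum, ← Finset.mul_sum]
      show 1 / y * tail w' + c * m = 1
      rw [hc]
      split_ifs with h
      · have hty : tail w' = y := by rw [h] at hyle; linarith
        rw [hty]
        field_simp
        ring
      · have hmpos : 0 < m := lt_of_le_of_ne hm0 (Ne.symm h)
        field_simp
        ring
  -- value equality
  have hterm2 : ∀ ω, ξs ω * p ω * (Z ω - w') = (1 / y) * (p ω * max (Z ω - w') 0) := by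
    intro ω
    by_cases h1 : w' < Z ω
    · have hmax : max (Z ω - w') 0 = Z ω - w' := max_eq_left (by linarith)
      rw [hξs]
      dsimp only
      rw [if_pos h1, hmax]
      ring
    · have hmax : max (Z ω - w') 0 = 0 := max_eq_right (by linarith [not_lt.mp h1])
      rw [hξs, hmax]
      dsimp only
      rw [if_neg h1]
      by_cases h2 : Z ω = w'
      · rw [if_pos h2, h2]; ring
      · rw [if_neg h2]; ring
  have hξsum : ∑ ω, ξs ω * p ω = 1 := hξmem.2
  have hfval : ∑ ω, ξs ω * p ω * Z ω
      = w' + (1 / y) * ∑ ω, p ω * max (Z ω - w') 0 := by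
    have h1 : ∀ ω, ξs ω * p ω * Z ω
        = (1 / y) * (p ω * max (Z ω - w') 0) + w' * (ξs ω * p ω) := by
      intro ω
      rw [← hterm2 ω]
      ring
    rw [Finset.sum_congr rfl (fun ω _ => h1 ω), Finset.sum_add_distrib,
      ← Finset.mul_sum, ← Finset.mul_sum, hξsum, mul_one]
    ring
  -- conclude
  set g : ℝ := w' + (1 / y) * ∑ ω, p ω * max (Z ω - w') 0 with hg
  set S := ((fun ξ : Ω → ℝ => ∑ ω, ξ ω * p ω * Z ω) '' riskEnv y p) with hS
  set T := {r : ℝ | ∃ w : ℝ, r = w + (1 / y) * ∑ ω, p ω * max (Z ω - w) 0} with hT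
  have hmemS : g ∈ S := ⟨ξs, hξmem, hfval⟩
  have hmemT : g ∈ T := ⟨w', rfl⟩
  have hub : ∀ s ∈ S, s ≤ g := by
    rintro s ⟨ξ, hξ, rfl⟩
    exact weak ξ hξ w'
  have hlb : ∀ t ∈ T, g ≤ t := by
    rintro t ⟨w, rfl⟩
    rw [← hfval]
    exact weak ξs hξmem w
  have hSup : sSup S = g :=
    le_antisymm (csSup_le ⟨g, hmemS⟩ hub) (le_csSup ⟨g, hub⟩ hmemS)
  have hInf : sInf T = g :=
    le_antisymm (csInf_le ⟨g, hlb⟩ hmemT) (le_csInf ⟨g, hmemT⟩ hlb)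
  refine ⟨by rw [hSup, hInf], ?_, ?_⟩
  · rw [hSup]; exact hmemS
  · rw [hInf]; exact hmemT
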